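/- (Lemma 1, coordinate part: E(3)-equivariance of the bilevel attention coordinate update.) In the bilevel attention setup, define the coordinate update x'ᵢ(p) = xᵢ(p) + ∑_{j∈J} β_j ∑_q α_j[p,q] · φ_X(R_j[p,q]) • (xᵢ(p) − x_j(q)). Then for any 3×3 real orthogonal matrix Q and t ∈ ℝ³, computing the update after replacing every coordinate x of every atom of every block by Q x + t yields at each p the point Q (x'ᵢ(p)) + t. -/
import Mathlib


open scoped BigOperators RealInnerProductSpace

/-- Atom-level correlation between block `i` and a neighbor block `j`:
`R[p,q] = (1/√d_r) ⟨W_Qᵀ hᵢ(p), W_Kᵀ h_j(q)⟩ + σ_D(‖xᵢ(p) − x_j(q)‖)`. -/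
noncomputable def Rcorr {d dr ni nj : ℕ}
    (WQ WK : Matrix (Fin d) (Fin dr) ℝ) (σD : ℝ → ℝ)
    (hi : Fin ni → EuclideanSpace ℝ (Fin d)) (xi : Fin ni → EuclideanSpace ℝ (Fin 3))
    (hj : Fin nj → EuclideanSpace ℝ (Fin d)) (xj : Fin nj → EuclideanSpace ℝ (Fin 3))
    (p : Fin ni) (q : Fin nj) : ℝ :=
  (1 / Real.sqrt dr) *
      ⟪Matrix.toEuclideanLin WQ.transpose (hi p),
        Matrix.toEuclideanLin WK.transpose (hj q)⟫
    + σD ‖xi p - xj q‖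

/-- Atom-level cross attention `α[p,q] = exp(R[p,q]) / ∑_{q'} exp(R[p,q'])`. -/
noncomputable def alphaAtt {d dr ni nj : ℕ}
    (WQ WK : Matrix (Fin d) (Fin dr) ℝ) (σD : ℝ → ℝ)
    (hi : Fin ni → EuclideanSpace ℝ (Fin d)) (xi : Fin ni → EuclideanSpace ℝ (Fin 3))
    (hj : Fin nj → EuclideanSpace ℝ (Fin d)) (xj : Fin nj → EuclideanSpace ℝ (Fin 3))
    (p : Fin ni) (q : Fin nj) : ℝ :=
  Real.exp (Rcorr WQ WK σD hi xi hj xj p q) /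
    ∑ q' : Fin nj, Real.exp (Rcorr WQ WK σD hi xi hj xj p q')

/-- Block-level correlation `r_j = (1/(nᵢ n_j)) ∑_{p,q} R_j[p,q] + e_j`. -/
noncomputable def rBlock {d dr ni nj : ℕ}
    (WQ WK : Matrix (Fin d) (Fin dr) ℝ) (σD : ℝ → ℝ)
    (hi : Fin ni → EuclideanSpace ℝ (Fin d)) (xi : Fin ni → EuclideanSpace ℝ (Fin 3))
    (hj : Fin nj → EuclideanSpace ℝ (Fin d)) (xj : Fin nj → EuclideanSpace ℝ (Fin 3))
    (ej : ℝ) : ℝ :=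
  (1 / ((ni : ℝ) * (nj : ℝ))) *
      (∑ p : Fin ni, ∑ q : Fin nj, Rcorr WQ WK σD hi xi hj xj p q)
    + ej

/-- Block-level cross attention `β_j = exp(r_j) / ∑_{j'∈J} exp(r_{j'})`. -/
noncomputable def betaAtt {d dr ni : ℕ} {ι : Type*} [Fintype ι]
    (WQ WK : Matrix (Fin d) (Fin dr) ℝ) (σD : ℝ → ℝ)
    (hi : Fin ni → EuclideanSpace ℝ (Fin d)) (xi : Fin ni → EuclideanSpace ℝ (Fin 3))
    (nb : ι → ℕ)
    (hb : ∀ j, Fin (nb j) → EuclideanSpace ℝ (Fin d))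
    (xb : ∀ j, Fin (nb j) → EuclideanSpace ℝ (Fin 3))
    (e : ι → ℝ) (j : ι) : ℝ :=
  Real.exp (rBlock WQ WK σD hi xi (hb j) (xb j) (e j)) /
    ∑ j' : ι, Real.exp (rBlock WQ WK σD hi xi (hb j') (xb j') (e j'))

/-- Coordinate update of the bilevel attention module:
`x'ᵢ(p) = xᵢ(p) + ∑_{j∈J} β_j ∑_q α_j[p,q] · φ_X(R_j[p,q]) • (xᵢ(p) − x_j(q))`. -/
noncomputable def coordUpdate {d dr ni : ℕ} {ι : Type*} [Fintype ι]
    (WQ WK : Matrix (Fin d) (Fin dr) ℝ) (σD : ℝ → ℝ) (φX : ℝ → ℝ)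
    (hi : Fin ni → EuclideanSpace ℝ (Fin d)) (xi : Fin ni → EuclideanSpace ℝ (Fin 3))
    (nb : ι → ℕ)
    (hb : ∀ j, Fin (nb j) → EuclideanSpace ℝ (Fin d))
    (xb : ∀ j, Fin (nb j) → EuclideanSpace ℝ (Fin 3))
    (e : ι → ℝ) (p : Fin ni) : EuclideanSpace ℝ (Fin 3) :=
  xi p + ∑ j : ι, betaAtt WQ WK σD hi xi nb hb xb e j •
    ∑ q : Fin (nb j),
      (alphaAtt WQ WK σD hi xi (hb j) (xb j) p q *
        φX (Rcorr WQ WK σD hi xi (hb j) (xb j) p q)) • (xi p - xb j q)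

/-- Feature update of the bilevel attention module:
`h'ᵢ(p) = hᵢ(p) + ∑_{j∈J} β_j • φ_m(∑_q α_j[p,q] • (W_Vᵀ h_j(q)))`. -/
noncomputable def featUpdate {d dr dv ni : ℕ} {ι : Type*} [Fintype ι]
    (WQ WK : Matrix (Fin d) (Fin dr) ℝ) (WV : Matrix (Fin d) (Fin dv) ℝ)
    (σD : ℝ → ℝ) (φm : EuclideanSpace ℝ (Fin dv) → EuclideanSpace ℝ (Fin d))
    (hi : Fin ni → EuclideanSpace ℝ (Fin d)) (xi : Fin ni → EuclideanSpace ℝ (Fin 3))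
    (nb : ι → ℕ)
    (hb : ∀ j, Fin (nb j) → EuclideanSpace ℝ (Fin d))
    (xb : ∀ j, Fin (nb j) → EuclideanSpace ℝ (Fin 3))
    (e : ι → ℝ) (p : Fin ni) : EuclideanSpace ℝ (Fin d) :=
  hi p + ∑ j : ι, betaAtt WQ WK σD hi xi nb hb xb e j •
    φm (∑ q : Fin (nb j),
      alphaAtt WQ WK σD hi xi (hb j) (xb j) p q •
        Matrix.toEuclideanLin WV.transpose (hb j q))

open Matrix in
private lemma norm_toEuclideanLin_of_orthogonal' {n : ℕ} (Q : Matrix (Fin n) (Fin n) ℝ)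
    (hQ : Q ∈ Matrix.orthogonalGroup (Fin n) ℝ) (v : EuclideanSpace ℝ (Fin n)) :
    ‖Matrix.toEuclideanLin Q v‖ = ‖v‖ := by
  have h1 : Q.transpose * Q = 1 := by
    have := Iff.mp (Matrix.mem_orthogonalGroup_iff' _ _) hQ
    simpa [Matrix.star_eq_conjTranspose, Matrix.conjTranspose_eq_transpose_of_trivial] using this
  have key : ⟪Matrix.toEuclideanLin Q v, Matrix.toEuclideanLin Q v⟫ = ⟪v, v⟫ := by
    simp only [PiLp.inner_apply, Matrix.toEuclideanLin_apply, RCLike.inner_apply, conj_trivial]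
    show (Q *ᵥ (WithLp.equiv 2 _ v)) ⬝ᵥ (Q *ᵥ (WithLp.equiv 2 _ v))
        = (WithLp.equiv 2 _ v) ⬝ᵥ (WithLp.equiv 2 _ v)
    rw [Matrix.dotProduct_mulVec, ← Matrix.vecMul_transpose, Matrix.vecMul_vecMul, h1,
      Matrix.vecMul_one]
  rw [real_inner_self_eq_norm_sq, real_inner_self_eq_norm_sq] at key
  exact (sq_eq_sq₀ (norm_nonneg _) (norm_nonneg _)).mp (by simpa [sq] using key)

theorem coordUpdate_E3_equivariant {d dr ni : ℕ} {ι : Type*} [Fintype ι] [Nonempty ι]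
    (hni : 1 ≤ ni) (nb : ι → ℕ) (hnb : ∀ j, 1 ≤ nb j)
    (WQ WK : Matrix (Fin d) (Fin dr) ℝ) (σD : ℝ → ℝ) (φX : ℝ → ℝ)
    (hi : Fin ni → EuclideanSpace ℝ (Fin d)) (xi : Fin ni → EuclideanSpace ℝ (Fin 3))
    (hb : ∀ j, Fin (nb j) → EuclideanSpace ℝ (Fin d))
    (xb : ∀ j, Fin (nb j) → EuclideanSpace ℝ (Fin 3))
    (e : ι → ℝ)
    (Q : Matrix (Fin 3) (Fin 3) ℝ) (hQ : Q ∈ Matrix.orthogonalGroup (Fin 3) ℝ)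
    (t : EuclideanSpace ℝ (Fin 3)) :
    ∀ p : Fin ni,
      coordUpdate WQ WK σD φX hi (fun p => Matrix.toEuclideanLin Q (xi p) + t)
          nb hb (fun j q => Matrix.toEuclideanLin Q (xb j q) + t) e p
        = Matrix.toEuclideanLin Q (coordUpdate WQ WK σD φX hi xi nb hb xb e p) + t := by
  intro p
  set L := Matrix.toEuclideanLin Q with hL
  have hnorm : ∀ v, ‖L v‖ = ‖v‖ := norm_toEuclideanLin_of_orthogonal' Q hQ
  have hdiff : ∀ (x y : EuclideanSpace ℝ (Fin 3)), (L x + t) - (L y + t) = L (x - y) := by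
    intro x y; rw [map_sub]; abel
  have hR : ∀ (j : ι) (p : Fin ni) (q : Fin (nb j)),
      Rcorr WQ WK σD hi (fun p => L (xi p) + t) (hb j) (fun q => L (xb j q) + t) p q
        = Rcorr WQ WK σD hi xi (hb j) (xb j) p q := by
    intro j p q
    unfold Rcorr
    rw [hdiff, hnorm]
  have halpha : ∀ (j : ι) (p : Fin ni) (q : Fin (nb j)),
      alphaAtt WQ WK σD hi (fun p => L (xi p) + t) (hb j) (fun q => L (xb j q) + t) p q
        = alphaAtt WQ WK σD hi xi (hb j) (xb j) p q := by
    intro j p q; unfold alphaAtt; simp only [hR]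
  have hbeta : ∀ (j : ι),
      betaAtt WQ WK σD hi (fun p => L (xi p) + t) nb hb (fun j q => L (xb j q) + t) e j
        = betaAtt WQ WK σD hi xi nb hb xb e j := by
    intro j; unfold betaAtt rBlock; simp only [hR]
  unfold coordUpdate
  simp only [hR, halpha, hbeta, hdiff]
  rw [map_add, map_sum]
  simp only [map_smul, map_sum]
  abel
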